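/- Let k ≥ 2 and let H be the quotient of R[B₃] by the relations sᵢᵏ = a_{k−1}sᵢ^{k−1} + ⋯ + a₁sᵢ + a₀ (i = 1,2), where a₀ ∈ R is a unit. There exists a ring automorphism Φ of H (as a ℤ-algebra, twisting the scalars) sending sᵢ ↦ sᵢ⁻¹, aⱼ ↦ −a₀⁻¹a_{k−j} for 1 ≤ j ≤ k−1, and a₀ ↦ a₀⁻¹. -/

import Mathlib

/-- The braid relation of `B₃` inside the free group on two generators. -/
def braidRels : Set (FreeGroup (Fin 2)) :=
  {FreeGroup.of 0 * FreeGroup.of 1 * FreeGroup.of 0 *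
    (FreeGroup.of 1 * FreeGroup.of 0 * FreeGroup.of 1)⁻¹}

/-- The braid group on three strands `B₃ = ⟨s₁, s₂ | s₁s₂s₁ = s₂s₁s₂⟩`. -/
def B3 : Type := PresentedGroup braidRels

noncomputable instance : Group B3 := by unfold B3; infer_instance

/-- The generators `s₁, s₂` of `B₃`. -/
noncomputable def σ (i : Fin 2) : B3 := PresentedGroup.of i

/-- The ring `R = ℤ[a_{k-1}, …, a₁, a₀, a₀⁻¹]`, realized as the localization of
`ℤ[a₀, …, a_{k-1}]` away from `a₀` (the variable of index `0`). -/
abbrev Rk (k : ℕ) [NeZero k] : Type :=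
  Localization.Away (MvPolynomial.X (0 : Fin k) : MvPolynomial (Fin k) ℤ)

/-- The coefficient `aⱼ` as an element of `Rk k`. -/
noncomputable def cf (k : ℕ) [NeZero k] (j : Fin k) : Rk k :=
  algebraMap (MvPolynomial (Fin k) ℤ) (Rk k) (MvPolynomial.X j)

/-- The relations `sᵢᵏ = a_{k-1} sᵢ^{k-1} + ⋯ + a₁ sᵢ + a₀` in `Rk[B₃]`. -/
inductive heckeRel (k : ℕ) [NeZero k] :
    MonoidAlgebra (Rk k) B3 → MonoidAlgebra (Rk k) B3 → Prop
  | rel (i : Fin 2) : heckeRel k ((MonoidAlgebra.of (Rk k) B3 (σ i)) ^ k)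
      (∑ j : Fin k, cf k j • (MonoidAlgebra.of (Rk k) B3 (σ i)) ^ (j : ℕ))

/-- The generic Hecke algebra `Hₖ = Rk[B₃]/(sᵢᵏ - Σⱼ aⱼ sᵢʲ : i = 1,2)`. -/
abbrev Hk (k : ℕ) [NeZero k] : Type := RingQuot (heckeRel k)

noncomputable section HeckeAux

namespace HeckeAux

noncomputable instance instHkRing (k : ℕ) [NeZero k] : Ring (Hk k) := RingQuot.instRing (heckeRel k)

variable (k : ℕ) [NeZero k]

lemma isUnit_cf0 : IsUnit (cf k 0) :=
  IsLocalization.map_units (Rk k)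
    (⟨_, Submonoid.mem_powers _⟩ : Submonoid.powers (MvPolynomial.X (0 : Fin k) :
      MvPolynomial (Fin k) ℤ))

/-- The target of coefficient `aⱼ` under the automorphism. -/
def fc (j : Fin k) : Rk k :=
  if j = 0 then Ring.inverse (cf k 0) else -(Ring.inverse (cf k 0)) * cf k (-j)

/-- The ring map `ℤ[a₀,…,a_{k-1}] → Rk` realizing the scalar twist. -/
def φ0 : MvPolynomial (Fin k) ℤ →+* Rk k := (MvPolynomial.aeval (fc k)).toRingHom

lemma φ0_X (j : Fin k) : φ0 k (MvPolynomial.X j) = fc k j := by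
  simp [φ0]

lemma isUnit_φ0_X0 : IsUnit (φ0 k (MvPolynomial.X 0)) := by
  rw [φ0_X, fc, if_pos rfl]
  exact isUnit_ringInverse.mpr (isUnit_cf0 k)

/-- The scalar-twisting automorphism of `Rk`. -/
def φR : Rk k →+* Rk k :=
  IsLocalization.Away.lift (MvPolynomial.X (0 : Fin k)) (isUnit_φ0_X0 k)

lemma φR_cf (j : Fin k) : φR k (cf k j) = fc k j := by
  rw [cf, φR, IsLocalization.Away.lift_eq, φ0_X]

lemma φR_inv : φR k (Ring.inverse (cf k 0)) = cf k 0 := by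
  have h1 : cf k 0 * Ring.inverse (cf k 0) = 1 :=
    Ring.mul_inverse_cancel _ (isUnit_cf0 k)
  have h2 : Ring.inverse (cf k 0) * φR k (Ring.inverse (cf k 0)) = 1 := by
    have := congrArg (φR k) h1
    rwa [map_mul, map_one, φR_cf, fc, if_pos rfl] at this
  calc φR k (Ring.inverse (cf k 0))
      = (cf k 0 * Ring.inverse (cf k 0)) * φR k (Ring.inverse (cf k 0)) := by rw [h1, one_mul]
    _ = cf k 0 * (Ring.inverse (cf k 0) * φR k (Ring.inverse (cf k 0))) := by ring
    _ = cf k 0 := by rw [h2, mul_one]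

lemma φR_fc (j : Fin k) : φR k (fc k j) = cf k j := by
  rcases eq_or_ne j 0 with rfl | hj
  · rw [fc, if_pos rfl, φR_inv]
  · rw [fc, if_neg hj, map_mul, map_neg, φR_inv, φR_cf, fc, if_neg (neg_ne_zero.mpr hj),
      neg_neg,
      show -cf k 0 * (-Ring.inverse (cf k 0) * cf k j) = cf k 0 * Ring.inverse (cf k 0) * cf k j
        by ring,
      Ring.mul_inverse_cancel _ (isUnit_cf0 k), one_mul]

lemma φR_φR (x : Rk k) : φR k (φR k x) = x := by
  have : (φR k).comp (φR k) = RingHom.id (Rk k) := by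
    apply IsLocalization.ringHom_ext (Submonoid.powers
      (MvPolynomial.X (0 : Fin k) : MvPolynomial (Fin k) ℤ))
    apply MvPolynomial.ringHom_ext
    · intro n
      simp only [RingHom.comp_apply]
      rw [show (MvPolynomial.C n : MvPolynomial (Fin k) ℤ) = algebraMap ℤ _ n from rfl,
        ← IsScalarTower.algebraMap_apply ℤ (MvPolynomial (Fin k) ℤ) (Rk k)]
      simp [map_intCast]
    · intro j
      simp only [RingHom.comp_apply]
      rw [show (algebraMap (MvPolynomial (Fin k) ℤ) (Rk k)) (MvPolynomial.X j) = cf k j from rfl,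
        φR_cf, φR_fc]
      simp [cf]
  exact RingHom.congr_fun this x

/-! ### The group side -/

lemma braid : σ 0 * σ 1 * σ 0 = σ 1 * σ 0 * σ 1 := by
  have hmem : (FreeGroup.of 0 * FreeGroup.of 1 * FreeGroup.of 0 *
      (FreeGroup.of 1 * FreeGroup.of 0 * FreeGroup.of 1)⁻¹ : FreeGroup (Fin 2)) ∈
      Subgroup.normalClosure braidRels :=
    Subgroup.subset_normalClosure rfl
  have h : (QuotientGroup.mk (FreeGroup.of 0 * FreeGroup.of 1 * FreeGroup.of 0 *
      (FreeGroup.of 1 * FreeGroup.of 0 * FreeGroup.of 1)⁻¹) : B3) = 1 :=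
    (QuotientGroup.eq_one_iff _).2 hmem
  have h2 : σ 0 * σ 1 * σ 0 * (σ 1 * σ 0 * σ 1)⁻¹ = 1 := by
    exact h
  exact mul_inv_eq_one.mp h2

/-- The group automorphism `σᵢ ↦ σᵢ⁻¹` of `B₃`. -/
def ι : B3 →* B3 :=
  PresentedGroup.toGroup (f := fun i => (σ i)⁻¹) (by
    rintro r hr
    rcases hr with rfl
    simp only [map_mul, map_inv, FreeGroup.lift_apply_of]
    rw [mul_inv_eq_one]
    have := congrArg (·⁻¹) (braid)
    simpa [mul_inv_rev, mul_assoc] using this)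

lemma ι_σ (i : Fin 2) : ι (σ i) = (σ i)⁻¹ := PresentedGroup.toGroup.of _

lemma ι_ι (g : B3) : ι (ι g) = g := by
  have : ι.comp ι = MonoidHom.id B3 := by
    refine PresentedGroup.ext fun i => ?_
    show ι (ι (σ i)) = σ i
    rw [ι_σ, map_inv, ι_σ, inv_inv]
  exact DFunLike.congr_fun this g

/-! ### The Hecke algebra side -/

open MonoidAlgebra RingQuot

abbrev mkH : MonoidAlgebra (Rk k) B3 →+* Hk k := RingQuot.mkRingHom (heckeRel k)

lemma mkH_alg (r : Rk k) :
    mkH k (algebraMap (Rk k) (MonoidAlgebra (Rk k) B3) r) = algebraMap (Rk k) (Hk k) r := by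
  have h := (RingQuot.mkAlgHom (Rk k) (heckeRel k)).commutes r
  have h2 := RingHom.congr_fun (RingQuot.mkAlgHom_coe (Rk k) (heckeRel k))
    (algebraMap (Rk k) (MonoidAlgebra (Rk k) B3) r)
  rw [← h2] at *
  exact h

/-- `sᵢ` as a unit of `Hk`. -/
def Su (i : Fin 2) : (Hk k)ˣ where
  val := mkH k (MonoidAlgebra.of (Rk k) B3 (σ i))
  inv := mkH k (MonoidAlgebra.of (Rk k) B3 ((σ i)⁻¹))
  val_inv := by
    rw [← map_mul, ← map_mul (MonoidAlgebra.of (Rk k) B3), mul_inv_cancel, map_one, map_one]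
  inv_val := by
    rw [← map_mul, ← map_mul (MonoidAlgebra.of (Rk k) B3), inv_mul_cancel, map_one, map_one]

lemma rel_Hk (i : Fin 2) :
    (↑(Su k i) : Hk k) ^ k = ∑ j : Fin k, algebraMap (Rk k) (Hk k) (cf k j) * ↑(Su k i) ^ (j : ℕ) := by
  have h := RingQuot.mkRingHom_rel (heckeRel.rel (k := k) i)
  rw [map_pow, map_sum] at h
  show (mkH k (MonoidAlgebra.of (Rk k) B3 (σ i))) ^ k = _
  rw [h]
  refine Finset.sum_congr rfl fun j _ => ?_
  rw [Algebra.smul_def, map_mul, mkH_alg, map_pow]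
  rfl

lemma val_neg_fin {j : Fin k} (hj : j ≠ 0) : ((-j : Fin k) : ℕ) = k - (j : ℕ) := by
  have h1 : (j : ℕ) ≠ 0 := fun h => hj (Fin.ext (by simpa using h))
  have h2 : (j : ℕ) < k := j.isLt
  rw [Fin.neg_def]
  exact Nat.mod_eq_of_lt (by omega)

/-- The key identity: `sᵢ⁻¹` satisfies the twisted Hecke relation. -/
lemma key (i : Fin 2) :
    ((↑(Su k i)⁻¹ : Hk k)) ^ k =
      ∑ j : Fin k, algebraMap (Rk k) (Hk k) (fc k j) * (↑(Su k i)⁻¹ : Hk k) ^ (j : ℕ) := by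
  set U := Su k i with hU
  have hcomm : ∀ (r : Rk k) (x : Hk k),
      algebraMap (Rk k) (Hk k) r * x = x * algebraMap (Rk k) (Hk k) r :=
    fun r x => Algebra.commutes r x
  have hpow : ((↑U⁻¹ : Hk k)) ^ k = ↑((U ^ k)⁻¹) := by
    rw [← inv_pow]; norm_cast
  rw [hpow]
  refine Units.inv_eq_of_mul_eq_one_right ?_
  -- maneuver: U^k * ∑ … = 1
  rw [Finset.mul_sum]
  have step1 : ∀ j : Fin k,
      (↑(U ^ k) : Hk k) * (algebraMap (Rk k) (Hk k) (fc k j) * (↑U⁻¹ : Hk k) ^ (j : ℕ)) =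
      algebraMap (Rk k) (Hk k) (fc k j) * ↑(U ^ (k - (j : ℕ))) := by
    intro j
    rw [← mul_assoc, ← hcomm, mul_assoc]
    congr 1
    rw [← Units.val_pow_eq_pow_val, ← Units.val_mul]
    congr 1
    rw [inv_pow]
    exact (pow_sub U (le_of_lt j.isLt)).symm
  rw [Finset.sum_congr rfl fun j _ => step1 j]
  have h0mem : (0 : Fin k) ∈ (Finset.univ : Finset (Fin k)) := Finset.mem_univ _
  rw [← Finset.add_sum_erase _ _ h0mem]
  have herase : ∑ j ∈ Finset.univ.erase (0 : Fin k),
      algebraMap (Rk k) (Hk k) (fc k j) * ↑(U ^ (k - (j : ℕ))) =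
      ∑ m ∈ Finset.univ.erase (0 : Fin k),
      -(algebraMap (Rk k) (Hk k) (Ring.inverse (cf k 0)) *
        (algebraMap (Rk k) (Hk k) (cf k m) * ↑(U ^ (m : ℕ)))) := by
    refine Finset.sum_nbij' (fun j => -j) (fun m => -m) ?_ ?_ ?_ ?_ ?_
    · intro j hj
      simp only [Finset.mem_erase, Finset.mem_univ, and_true] at hj ⊢
      exact neg_ne_zero.mpr hj
    · intro m hm
      simp only [Finset.mem_erase, Finset.mem_univ, and_true] at hm ⊢
      exact neg_ne_zero.mpr hm
    · intro j _; exact neg_neg j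
    · intro m _; exact neg_neg m
    · intro j hj
      simp only [Finset.mem_erase, Finset.mem_univ, and_true] at hj
      rw [fc, if_neg hj, map_mul, map_neg, val_neg_fin k hj, neg_mul, neg_mul, mul_assoc]
  rw [herase, fc, if_pos rfl, Finset.sum_neg_distrib, ← Finset.mul_sum]
  have hUk : (↑(U ^ (k - ((0 : Fin k) : ℕ))) : Hk k) =
      ∑ m : Fin k, algebraMap (Rk k) (Hk k) (cf k m) * ↑(U ^ (m : ℕ)) := by
    rw [Fin.val_zero, Nat.sub_zero]
    exact (rel_Hk k i).trans (Finset.sum_congr rfl fun m _ => by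
      rw [← Units.val_pow_eq_pow_val])
  rw [hUk, ← sub_eq_add_neg, ← mul_sub]
  have hsub : (∑ m : Fin k, algebraMap (Rk k) (Hk k) (cf k m) * ↑(U ^ (m : ℕ))) -
      (∑ m ∈ Finset.univ.erase (0 : Fin k),
        algebraMap (Rk k) (Hk k) (cf k m) * ↑(U ^ (m : ℕ))) =
      algebraMap (Rk k) (Hk k) (cf k 0) := by
    rw [← Finset.add_sum_erase _ _ (Finset.mem_univ (0 : Fin k))]
    simp
  rw [hsub, ← map_mul, Ring.inverse_mul_cancel _ (isUnit_cf0 k), map_one]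

/-! ### The automorphism -/

/-- `B₃ → Hk` sending `g ↦ [ι g]`. -/
def ghom : B3 →* Hk k :=
  ((RingQuot.mkRingHom (heckeRel k)).toMonoidHom.comp
    (MonoidAlgebra.of (Rk k) B3)).comp ι

lemma ghom_apply (g : B3) : ghom k g = mkH k (MonoidAlgebra.of (Rk k) B3 (ι g)) := rfl

/-- The lift of `Φ` to the monoid algebra. -/
def Φ' : MonoidAlgebra (Rk k) B3 →+* Hk k :=
  MonoidAlgebra.liftNCRingHom ((algebraMap (Rk k) (Hk k)).comp (φR k)) (ghom k)
    (fun r x => (Algebra.commutes (φR k r) (ghom k x) : _))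

lemma Φ'_single (g : B3) (r : Rk k) :
    Φ' k (MonoidAlgebra.single g r) =
      algebraMap (Rk k) (Hk k) (φR k r) * ghom k g := by
  simp [Φ', MonoidAlgebra.liftNCRingHom]

lemma Φ'_of (g : B3) : Φ' k (MonoidAlgebra.of (Rk k) B3 g) =
    mkH k (MonoidAlgebra.of (Rk k) B3 (ι g)) := by
  rw [MonoidAlgebra.of_apply, Φ'_single, map_one, map_one, one_mul, ghom_apply]

lemma Φ'_algebraMap (r : Rk k) :
    Φ' k (algebraMap (Rk k) (MonoidAlgebra (Rk k) B3) r) =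
      algebraMap (Rk k) (Hk k) (φR k r) := by
  rw [show algebraMap (Rk k) (MonoidAlgebra (Rk k) B3) r = MonoidAlgebra.single 1 r from rfl,
    Φ'_single, map_one, mul_one]

lemma Φ'_rel : ∀ ⦃x y⦄, heckeRel k x y → Φ' k x = Φ' k y := by
  rintro x y ⟨i⟩
  rw [map_pow, map_sum, Φ'_of, ι_σ]
  have hinv : mkH k (MonoidAlgebra.of (Rk k) B3 ((σ i)⁻¹)) = (↑(Su k i)⁻¹ : Hk k) := rfl
  rw [hinv, key k i]
  refine Finset.sum_congr rfl fun j _ => ?_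
  rw [Algebra.smul_def, map_mul, Φ'_algebraMap, φR_cf, map_pow, Φ'_of, ι_σ, hinv]

/-- The induced endomorphism of `Hk`. -/
def Φh : Hk k →+* Hk k := RingQuot.lift ⟨Φ' k, Φ'_rel k⟩

lemma Φh_mk (x : MonoidAlgebra (Rk k) B3) : Φh k (mkH k x) = Φ' k x :=
  RingQuot.lift_mkRingHom_apply _ (Φ'_rel k) x

lemma Φh_of (g : B3) : Φh k (mkH k (MonoidAlgebra.of (Rk k) B3 g)) =
    mkH k (MonoidAlgebra.of (Rk k) B3 (ι g)) := by
  rw [Φh_mk, Φ'_of]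

lemma Φh_algebraMap (r : Rk k) :
    Φh k (algebraMap (Rk k) (Hk k) r) = algebraMap (Rk k) (Hk k) (φR k r) := by
  rw [← mkH_alg, Φh_mk, Φ'_algebraMap]

lemma Φh_Φh : (Φh k).comp (Φh k) = RingHom.id (Hk k) := by
  refine RingQuot.ringQuot_ext _ _ ?_
  refine MonoidAlgebra.ringHom_ext (fun r => ?_) (fun g => ?_)
  · have h1 : (MonoidAlgebra.single (1 : B3) r) =
        algebraMap (Rk k) (MonoidAlgebra (Rk k) B3) r := rfl
    simp only [RingHom.comp_apply, h1, mkH_alg]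
    rw [Φh_algebraMap, Φh_algebraMap, φR_φR]
    rfl
  · have h1 : (MonoidAlgebra.single (g : B3) (1 : Rk k)) =
        MonoidAlgebra.of (Rk k) B3 g := rfl
    simp only [RingHom.comp_apply, h1]
    rw [show RingQuot.mkRingHom (heckeRel k) (MonoidAlgebra.of (Rk k) B3 g) =
        mkH k (MonoidAlgebra.of (Rk k) B3 g) from rfl, Φh_of, Φh_of, ι_ι]
    rfl

/-- The automorphism. -/
def Φe : Hk k ≃+* Hk k := RingEquiv.ofRingHom (Φh k) (Φh k) (Φh_Φh k) (Φh_Φh k)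

lemma Φe_apply (x : Hk k) : Φe k x = Φh k x := rfl


end HeckeAux


end HeckeAux

theorem hecke_automorphism (k : ℕ) [NeZero k] (hk : 2 ≤ k) :
    ∃ Φ : Hk k ≃+* Hk k,
      (∀ i : Fin 2,
        Φ (RingQuot.mkRingHom (heckeRel k) (MonoidAlgebra.of (Rk k) B3 (σ i))) =
          RingQuot.mkRingHom (heckeRel k) (MonoidAlgebra.of (Rk k) B3 (σ i)⁻¹)) ∧
      (∀ j : Fin k, ∀ hj : j.val ≠ 0,
        Φ (algebraMap (Rk k) (Hk k) (cf k j)) =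
          algebraMap (Rk k) (Hk k)
            (-(Ring.inverse (cf k ⟨0, by omega⟩)) *
              cf k ⟨k - j.val, by have := j.isLt; omega⟩)) ∧
      Φ (algebraMap (Rk k) (Hk k) (cf k ⟨0, by omega⟩)) =
        algebraMap (Rk k) (Hk k) (Ring.inverse (cf k ⟨0, by omega⟩)) := by
  refine ⟨HeckeAux.Φe k, fun i => ?_, fun j hj => ?_, ?_⟩
  · rw [HeckeAux.Φe_apply, HeckeAux.Φh_of, HeckeAux.ι_σ]
  · have hzero : (⟨0, by omega⟩ : Fin k) = 0 := Fin.ext (by simp)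
    have hj' : j ≠ 0 := fun h => hj (by rw [h]; simp)
    have hidx : (⟨k - j.val, by have := j.isLt; omega⟩ : Fin k) = -j := by
      refine Fin.ext ?_
      rw [HeckeAux.val_neg_fin k hj']
    rw [HeckeAux.Φe_apply, HeckeAux.Φh_algebraMap, HeckeAux.φR_cf, HeckeAux.fc, if_neg hj',
      hzero, hidx]
  · have hzero : (⟨0, by omega⟩ : Fin k) = 0 := Fin.ext (by simp)
    rw [hzero, HeckeAux.Φe_apply, HeckeAux.Φh_algebraMap, HeckeAux.φR_cf, HeckeAux.fc,
      if_pos rfl]
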